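/- For a > λ̄_max, the minimum of E(·,a) over the doubly stochastic matrices equals the minimum of the original energy E(X) = xᵀWx + cᵀx + d over the permutation matrices. -/

import Mathlib

open Matrix

def IsPermMatrix {n : ℕ} (X : Matrix (Fin n) (Fin n) ℝ) : Prop :=
  ∃ σ : Equiv.Perm (Fin n), ∀ i j, X i j = if σ i = j then 1 else 0

def IsDoublyStochastic {n : ℕ} (X : Matrix (Fin n) (Fin n) ℝ) : Prop :=
  (∀ i j, 0 ≤ X i j) ∧ (∀ i, ∑ j, X i j = 1) ∧ (∀ j, ∑ i, X i j = 1)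

/-- Column stack of a matrix, as a vector indexed by `Fin n × Fin n`. -/
def colStack {n : ℕ} (X : Matrix (Fin n) (Fin n) ℝ) : Fin n × Fin n → ℝ :=
  fun p => X p.1 p.2

/-- The one-parameter family of energies
`E(X,a) = xᵀWx + cᵀx + d − a‖X‖_F² + a·n`, `x` the column stack of `X`. -/
def energy {n : ℕ} (W : Matrix (Fin n × Fin n) (Fin n × Fin n) ℝ)
    (c : Fin n × Fin n → ℝ) (d : ℝ) (X : Matrix (Fin n) (Fin n) ℝ) (a : ℝ) : ℝ :=
  colStack X ⬝ᵥ (W *ᵥ colStack X) + c ⬝ᵥ colStack X + d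
    - a * (∑ i, ∑ j, (X i j) ^ 2) + a * n

/- ## Auxiliary lemmas -/

lemma rayleigh_bound {k : ℕ} (M : Matrix (Fin k) (Fin k) ℝ) (hM : M.IsHermitian)
    (lamMax a : ℝ)
    (hub : ∀ μ : ℝ, Module.End.HasEigenvalue (Matrix.toLin' M) μ → μ ≤ lamMax)
    (ha : lamMax < a) (z : Fin k → ℝ) :
    z ⬝ᵥ (M *ᵥ z) ≤ a * (z ⬝ᵥ z) := by
  set N : Matrix (Fin k) (Fin k) ℝ := a • (1 : Matrix (Fin k) (Fin k) ℝ) - M with hNdef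
  have hN : N.IsHermitian := by
    unfold Matrix.IsHermitian
    rw [hNdef, conjTranspose_sub, hM]
    congr 1
    simp [conjTranspose_smul]
  have heig : ∀ i, 0 ≤ hN.eigenvalues i := by
    intro i
    set v : Fin k → ℝ := ⇑(hN.eigenvectorBasis i) with hv
    have hv0 : v ≠ 0 := by
      have := hN.eigenvectorBasis.toBasis.ne_zero i
      intro h; apply this; ext j; exact congrFun h j
    have hvN : N *ᵥ v = hN.eigenvalues i • v := hN.mulVec_eigenvectorBasis i
    have hvM : M *ᵥ v = (a - hN.eigenvalues i) • v := by
      have : (a • (1 : Matrix (Fin k) (Fin k) ℝ) - M) *ᵥ v = hN.eigenvalues i • v := hvN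
      rw [sub_mulVec, smul_mulVec, one_mulVec] at this
      have h2 : M *ᵥ v = a • v - hN.eigenvalues i • v := by linear_combination (norm := module) -this
      rw [h2, sub_smul]
    have hev : Module.End.HasEigenvalue (Matrix.toLin' M) (a - hN.eigenvalues i) := by
      apply Module.End.hasEigenvalue_of_hasEigenvector (x := v)
      refine ⟨Module.End.mem_eigenspace_iff.2 ?_, hv0⟩
      simpa [Matrix.toLin'_apply] using hvM
    have := hub _ hev
    linarith
  have hps : N.PosSemidef := hN.posSemidef_iff_eigenvalues_nonneg.2 heig
  have h0 := hps.dotProduct_mulVec_nonneg z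
  rw [hNdef] at h0
  have : star z = z := by simp
  rw [this, sub_mulVec, smul_mulVec, one_mulVec, dotProduct_sub, dotProduct_smul] at h0
  simp only [smul_eq_mul] at h0
  linarith

lemma dot_shift {m k : Type*} [Fintype m] [Fintype k]
    (F : Matrix m k ℝ) (z : k → ℝ) (w : m → ℝ) :
    (F *ᵥ z) ⬝ᵥ w = z ⬝ᵥ (Fᵀ *ᵥ w) := by
  rw [Matrix.dotProduct_mulVec, Matrix.vecMul_transpose, dotProduct_comm, Matrix.dotProduct_mulVec]

lemma isPermMatrix_iff {n : ℕ} (X : Matrix (Fin n) (Fin n) ℝ) :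
    IsPermMatrix X ↔ X ∈ {M | ∃ σ : Equiv.Perm (Fin n), σ.permMatrix ℝ = M} := by
  constructor
  · rintro ⟨σ, h⟩
    exact ⟨σ, by ext i j; rw [h i j]; simp [Equiv.Perm.permMatrix, PEquiv.toMatrix_apply,
      Equiv.toPEquiv_apply, Option.mem_def, eq_comm]⟩
  · rintro ⟨σ, rfl⟩
    exact ⟨σ, fun i j => by simp [Equiv.Perm.permMatrix, PEquiv.toMatrix_apply,
      Equiv.toPEquiv_apply, Option.mem_def, eq_comm]⟩

lemma isDS_iff {n : ℕ} (X : Matrix (Fin n) (Fin n) ℝ) :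
    IsDoublyStochastic X ↔ X ∈ doublyStochastic ℝ (Fin n) := by
  rw [mem_doublyStochastic_iff_sum]; rfl

lemma sumsq_eq {n : ℕ} (X : Matrix (Fin n) (Fin n) ℝ) :
    (∑ i, ∑ j, (X i j) ^ 2) = colStack X ⬝ᵥ colStack X := by
  rw [dotProduct, Fintype.sum_prod_type]
  simp [colStack, sq]

lemma energy_perm {n : ℕ} (W : Matrix (Fin n × Fin n) (Fin n × Fin n) ℝ)
    (c : Fin n × Fin n → ℝ) (d : ℝ) {X : Matrix (Fin n) (Fin n) ℝ}
    (hX : IsPermMatrix X) (a : ℝ) : energy W c d X a = energy W c d X 0 := by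
  obtain ⟨σ, h⟩ := hX
  have : (∑ i, ∑ j, (X i j) ^ 2) = (n : ℝ) := by
    have : ∀ i, ∑ j, (X i j)^2 = 1 := by
      intro i
      rw [Finset.sum_eq_single (σ i)] <;> simp_all [eq_comm]
    simp [this]
  simp [energy, this]

theorem stmt_11 {n k : ℕ} (W : Matrix (Fin n × Fin n) (Fin n × Fin n) ℝ) (hW : W.IsSymm)
    (c : Fin n × Fin n → ℝ) (d : ℝ)
    (F : Matrix (Fin n × Fin n) (Fin k) ℝ) (hF : Fᵀ * F = 1)
    (hker : ∀ y : Fin n × Fin n → ℝ, (∃ z, F *ᵥ z = y) ↔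
      ((∀ i, ∑ j, y (i, j) = 0) ∧ (∀ j, ∑ i, y (i, j) = 0)))
    (lamMax : ℝ)
    (hmax : IsGreatest {μ | Module.End.HasEigenvalue (Matrix.toLin' (Fᵀ * W * F)) μ} lamMax)
    (a : ℝ) (ha : lamMax < a) :
    sInf ((fun X => energy W c d X a) '' {X | IsDoublyStochastic X})
      = sInf ((fun X => energy W c d X 0) '' {X | IsPermMatrix X}) := by
  -- M is Hermitian
  have hM : (Fᵀ * W * F).IsHermitian := by
    unfold Matrix.IsHermitian
    rw [conjTranspose_eq_transpose_of_trivial, transpose_mul, transpose_mul,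
      transpose_transpose, hW.eq, Matrix.mul_assoc]
  -- the key quadratic negativity on the kernel directions
  have hq : ∀ X Y : Matrix (Fin n) (Fin n) ℝ, IsDoublyStochastic X → IsDoublyStochastic Y →
      (colStack X - colStack Y) ⬝ᵥ (W *ᵥ (colStack X - colStack Y))
        ≤ a * ((colStack X - colStack Y) ⬝ᵥ (colStack X - colStack Y)) := by
    intro X Y hX hY
    obtain ⟨z, hz⟩ := (hker (colStack X - colStack Y)).2 ⟨by
        intro i
        simp only [Pi.sub_apply, colStack, Finset.sum_sub_distrib]
        rw [hX.2.1 i, hY.2.1 i]; ring,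
      by
        intro j
        simp only [Pi.sub_apply, colStack, Finset.sum_sub_distrib]
        rw [hX.2.2 j, hY.2.2 j]; ring⟩
    have h1 : (F *ᵥ z) ⬝ᵥ (W *ᵥ (F *ᵥ z)) = z ⬝ᵥ ((Fᵀ * W * F) *ᵥ z) := by
      rw [dot_shift, mulVec_mulVec, mulVec_mulVec, Matrix.mul_assoc]
    have h2 : (F *ᵥ z) ⬝ᵥ (F *ᵥ z) = z ⬝ᵥ z := by
      rw [dot_shift, mulVec_mulVec, hF, one_mulVec]
    rw [← hz, h1, h2]
    exact rayleigh_bound _ hM lamMax a (fun μ h => hmax.2 h) ha z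
  -- concavity on doubly stochastic matrices
  have hconc : ∀ X Y : Matrix (Fin n) (Fin n) ℝ, IsDoublyStochastic X → IsDoublyStochastic Y →
      ∀ t s : ℝ, 0 ≤ t → 0 ≤ s → t + s = 1 →
      t * energy W c d X a + s * energy W c d Y a ≤ energy W c d (t • X + s • Y) a := by
    intro X Y hX hY t s ht hs hts
    have hcs : colStack (t • X + s • Y) = t • colStack X + s • colStack Y := by
      funext p; simp [colStack]
    have hsym : ∀ u v : Fin n × Fin n → ℝ, u ⬝ᵥ (W *ᵥ v) = v ⬝ᵥ (W *ᵥ u) := by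
      intro u v
      rw [Matrix.dotProduct_mulVec, ← Matrix.mulVec_transpose, hW.eq, dotProduct_comm]
    have hqXY := hq X Y hX hY
    simp only [mulVec_sub, dotProduct_sub, sub_dotProduct] at hqXY
    rw [hsym (colStack Y) (colStack X), dotProduct_comm (colStack Y) (colStack X)] at hqXY
    simp only [energy, hcs, sumsq_eq, mulVec_add, mulVec_smul, dotProduct_add, add_dotProduct,
      smul_dotProduct, dotProduct_smul, smul_eq_mul]
    rw [hsym (colStack Y) (colStack X), dotProduct_comm (colStack Y) (colStack X)]
    have hs' : s = 1 - t := by linarith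
    subst hs'
    nlinarith [mul_le_mul_of_nonneg_left hqXY (mul_nonneg ht hs), mul_nonneg ht hs]
  -- sets
  set Pset : Set (Matrix (Fin n) (Fin n) ℝ) := {X | IsPermMatrix X}
  set Sset : Set (Matrix (Fin n) (Fin n) ℝ) := {X | IsDoublyStochastic X}
  have hPS : Pset ⊆ Sset := by
    rintro X hX
    rw [Set.mem_setOf_eq, isDS_iff]
    obtain ⟨σ, hσ⟩ := (isPermMatrix_iff X).1 hX
    rw [← hσ]
    exact permMatrix_mem_doublyStochastic
  have hSconv : Convex ℝ Sset := by
    have : Sset = (doublyStochastic ℝ (Fin n) : Set _) := by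
      ext X; exact isDS_iff X
    rw [this]
    exact convex_doublyStochastic
  have hconcOn : ConcaveOn ℝ Sset (fun X => energy W c d X a) := by
    refine ⟨hSconv, fun X hX Y hY t s ht hs hts => ?_⟩
    simpa [smul_eq_mul] using hconc X Y hX hY t s ht hs hts
  -- every DS matrix is dominated by a permutation matrix
  have hdom : ∀ X ∈ Sset, ∃ p ∈ Pset, energy W c d p a ≤ energy W c d X a := by
    intro X hX
    have hXhull : X ∈ convexHull ℝ {M | ∃ σ : Equiv.Perm (Fin n), σ.permMatrix ℝ = M} := by
      have : X ∈ (doublyStochastic ℝ (Fin n) : Set _) := (isDS_iff X).1 hX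
      rw [doublyStochastic_eq_convexHull_permMatrix] at this
      exact this
    have hPset : {M | ∃ σ : Equiv.Perm (Fin n), σ.permMatrix ℝ = M} = Pset := by
      ext M; rw [Set.mem_setOf_eq]; exact ((isPermMatrix_iff M).symm)
    rw [hPset] at hXhull
    exact hconcOn.exists_le_of_mem_convexHull hPS hXhull
  -- finiteness and nonemptiness
  have hPne : Pset.Nonempty := ⟨(1 : Equiv.Perm (Fin n)).permMatrix ℝ,
    (isPermMatrix_iff _).2 ⟨1, rfl⟩⟩
  have hPfin : Pset.Finite := by
    have : Pset ⊆ (fun σ : Equiv.Perm (Fin n) => σ.permMatrix ℝ) '' Set.univ := by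
      intro X hX
      obtain ⟨σ, hσ⟩ := (isPermMatrix_iff X).1 hX
      exact ⟨σ, Set.mem_univ _, hσ⟩
    exact Set.Finite.subset (Set.finite_univ.image _) this
  set B := (fun X => energy W c d X 0) '' Pset with hB
  have hBfin : B.Finite := hPfin.image _
  have hBne : B.Nonempty := hPne.image _
  have hmem : sInf B ∈ B := hBne.csInf_mem hBfin
  -- lower bound: every value on Sset is ≥ sInf B
  have hlb : ∀ v ∈ (fun X => energy W c d X a) '' Sset, sInf B ≤ v := by
    rintro v ⟨X, hX, rfl⟩
    obtain ⟨p, hp, hpe⟩ := hdom X hX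
    have : energy W c d p 0 ∈ B := ⟨p, hp, rfl⟩
    calc sInf B ≤ energy W c d p 0 := csInf_le hBfin.bddBelow this
      _ = energy W c d p a := (energy_perm W c d hp a).symm
      _ ≤ energy W c d X a := hpe
  obtain ⟨p0, hp0, hp0e⟩ := hmem
  refine le_antisymm ?_ ?_
  · -- sInf A ≤ sInf B : sInf B is attained at p0 ∈ Sset with same value
    have hmemA : sInf B ∈ (fun X => energy W c d X a) '' Sset := by
      refine ⟨p0, hPS hp0, ?_⟩
      show energy W c d p0 a = sInf B
      rw [energy_perm W c d hp0 a]
      exact hp0e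
    exact csInf_le ⟨sInf B, hlb⟩ hmemA
  · exact le_csInf ⟨_, ⟨p0, hPS hp0, rfl⟩⟩ hlb
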